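/- arXiv:1201.6152 — 2 statements merged into one kernel-verified Lean document; each statement's English description precedes it below -/
import Mathlib

section
/- Let p be a prime. For every k with 1 ≤ k ≤ p-1, the Gaussian q-binomial coefficients satisfy binom_q(p−1+k, k) · binom_q(p−1, k)^{−1} ≡ ((-1)^k · q^{C(k+1,2)} · [p]_q / [k]_q) · (1 + [p]_q/[k]_q + [p]_q · ∑_{j=1}^{k-1} (1+q^j)/[j]_q) (mod [p]_q^3). -/
open Polynomial Finset

noncomputable section

/-- The `q`-integer `[n]_q = 1 + q + ⋯ + q^(n-1)`, as a polynomial in `ℚ[q]`. -/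
def qIntP (n : ℕ) : Polynomial ℚ := ∑ i ∈ Finset.range n, X ^ i

/-- The `q`-integer `[n]_q` viewed in the field of rational functions `ℚ(q)`. -/
def qN (n : ℕ) : RatFunc ℚ := algebraMap (Polynomial ℚ) (RatFunc ℚ) (qIntP n)

/-- The `q`-Pochhammer symbol `(q; q)_n = ∏_{j=1}^{n} (1 - q^j)` in `ℚ(q)`. -/
def qqPoch (n : ℕ) : RatFunc ℚ :=
  algebraMap (Polynomial ℚ) (RatFunc ℚ) (∏ j ∈ Finset.range n, (1 - X ^ (j + 1)))

/-- The `q`-Pochhammer symbol `(-q; q)_n = ∏_{j=1}^{n} (1 + q^j)` in `ℚ(q)`. -/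
def nqPoch (n : ℕ) : RatFunc ℚ :=
  algebraMap (Polynomial ℚ) (RatFunc ℚ) (∏ j ∈ Finset.range n, (1 + X ^ (j + 1)))

/-- The Gaussian `q`-binomial coefficient, as a rational function. -/
def qbin (n k : ℕ) : RatFunc ℚ :=
  if k ≤ n then qqPoch n / (qqPoch k * qqPoch (n - k)) else 0

/-- `qCong p r x y` means `x ≡ y (mod [p]_q^r)`: the difference `x - y` can be
written as a fraction whose numerator (a polynomial) is divisible by `[p]_q^r`
and whose denominator is relatively prime to `[p]_q`. -/
def qCong (p r : ℕ) (x y : RatFunc ℚ) : Prop :=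
  ∃ a b : Polynomial ℚ, IsCoprime b (qIntP p) ∧
    (x - y) * algebraMap (Polynomial ℚ) (RatFunc ℚ) b =
      algebraMap (Polynomial ℚ) (RatFunc ℚ) (qIntP p ^ r * a)

local notation "AM" => algebraMap (Polynomial ℚ) (RatFunc ℚ)


lemma qIntP_eval_one (n : ℕ) : (qIntP n).eval 1 = n := by
  simp [qIntP, eval_finset_sum]

lemma qIntP_ne_zero {n : ℕ} (hn : 1 ≤ n) : qIntP n ≠ 0 := by
  intro h
  have h1 : ((n : ℚ)) = 0 := by rw [← qIntP_eval_one n, h]; simp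
  have : n = 0 := by exact_mod_cast h1
  omega

lemma qIntP_eq_cyclotomic {p : ℕ} (hp : p.Prime) : qIntP p = cyclotomic p ℚ := by
  haveI : Fact p.Prime := ⟨hp⟩
  rw [cyclotomic_prime]
  rfl

lemma qIntP_irreducible {p : ℕ} (hp : p.Prime) : Irreducible (qIntP p) := by
  rw [qIntP_eq_cyclotomic hp]
  exact cyclotomic.irreducible_rat hp.pos

lemma one_sub_X_pow_ne_zero {i : ℕ} (hi : 1 ≤ i) : (1 - X ^ i : Polynomial ℚ) ≠ 0 := by
  intro h
  have := congrArg (eval 0) h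
  simp [zero_pow (by omega : i ≠ 0)] at this

lemma natDegree_one_sub_X_pow (i : ℕ) (hi : 1 ≤ i) :
    (1 - X ^ i : Polynomial ℚ).natDegree = i := by
  rw [show (1 - X ^ i : Polynomial ℚ) = -(X ^ i - C 1) by simp, natDegree_neg,
    natDegree_X_pow_sub_C]

lemma coprime_one_sub_X_pow {p : ℕ} (hp : p.Prime) {i : ℕ} (h1 : 1 ≤ i) (h2 : i ≤ p - 1) :
    IsCoprime (1 - X ^ i : Polynomial ℚ) (qIntP p) := by
  refine (((qIntP_irreducible hp).coprime_iff_not_dvd).2 ?_).symm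
  intro hdvd
  have hne := one_sub_X_pow_ne_zero (i := i) h1
  have hdegP : (qIntP p).natDegree = p - 1 := by
    rw [qIntP_eq_cyclotomic hp, natDegree_cyclotomic, Nat.totient_prime hp]
  have hle := Polynomial.natDegree_le_of_dvd hdvd hne
  rw [hdegP, natDegree_one_sub_X_pow i h1] at hle
  obtain ⟨c, hc⟩ := hdvd
  have hc0 : c ≠ 0 := by rintro rfl; simp at hc; exact hne hc
  have hdegc : c.natDegree = 0 := by
    have := natDegree_mul (qIntP_ne_zero (by omega : 1 ≤ p)) hc0
    rw [← hc, natDegree_one_sub_X_pow i h1, hdegP] at this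
    omega
  have he := congrArg (eval 1) hc
  rw [eval_mul, qIntP_eval_one] at he
  simp at he
  rcases he with he | he
  · exact hp.ne_zero (by exact_mod_cast he)
  · -- c.eval 1 = 0 with natDegree 0 means c = 0
    have := Polynomial.eq_C_of_natDegree_eq_zero hdegc
    rw [this] at he hc0
    simp at he
    rw [he] at hc0
    simp at hc0

lemma coprime_X_qIntP {p : ℕ} (hp : p.Prime) : IsCoprime (X : Polynomial ℚ) (qIntP p) := by
  refine (((qIntP_irreducible hp).coprime_iff_not_dvd).2 ?_).symm
  intro hdvd
  obtain ⟨g, hg⟩ := hdvd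
  have hz : (qIntP p).eval 0 = 1 := by
    simp [qIntP, eval_finset_sum, zero_pow_eq, Finset.mem_range, hp.pos]
  have h0 : g.eval 0 = 0 := by
    have := congrArg (eval 0) hg
    rw [eval_mul, hz, one_mul, eval_X] at this
    exact this.symm
  have hXg : (X : Polynomial ℚ) ∣ g := by
    rw [Polynomial.X_dvd_iff, Polynomial.coeff_zero_eq_eval_zero, h0]
  obtain ⟨h, rfl⟩ := hXg
  rw [show qIntP p * (X * h) = X * (qIntP p * h) by ring] at hg
  have : (1 : Polynomial ℚ) = qIntP p * h := mul_left_cancel₀ Polynomial.X_ne_zero (by rw [mul_one]; exact hg)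
  exact (qIntP_irreducible hp).not_isUnit (IsUnit.of_mul_eq_one _ this.symm)

/-- `Dp p r x` : `x = (1-X^p)^r * a / b` with `b` coprime to `[p]_q`. -/
def Dp (p r : ℕ) (x : RatFunc ℚ) : Prop :=
  ∃ a b : Polynomial ℚ, IsCoprime b (qIntP p) ∧
    x * AM b = AM ((1 - X ^ p) ^ r * a)

/-- `[p]_q` in `ℚ(q)` -/
def ep (p : ℕ) : RatFunc ℚ := AM (1 - X ^ p)

variable {p : ℕ}

lemma Dp_zero (r : ℕ) : Dp p r 0 := ⟨0, 1, isCoprime_one_left, by simp⟩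

lemma Dp_add {r : ℕ} {x y : RatFunc ℚ} (hx : Dp p r x) (hy : Dp p r y) : Dp p r (x + y) := by
  obtain ⟨a1, b1, hb1, h1⟩ := hx
  obtain ⟨a2, b2, hb2, h2⟩ := hy
  refine ⟨a1 * b2 + a2 * b1, b1 * b2, hb1.mul_left hb2, ?_⟩
  have key : (x + y) * AM (b1 * b2) = (x * AM b1) * AM b2 + (y * AM b2) * AM b1 := by
    rw [map_mul]; ring
  rw [key, h1, h2, ← map_mul, ← map_mul, ← map_add]
  congr 1; ring

lemma Dp_mul {r s : ℕ} {x y : RatFunc ℚ} (hx : Dp p r x) (hy : Dp p s y) :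
    Dp p (r + s) (x * y) := by
  obtain ⟨a1, b1, hb1, h1⟩ := hx
  obtain ⟨a2, b2, hb2, h2⟩ := hy
  refine ⟨a1 * a2, b1 * b2, hb1.mul_left hb2, ?_⟩
  have key : (x * y) * AM (b1 * b2) = (x * AM b1) * (y * AM b2) := by
    rw [map_mul]; ring
  rw [key, h1, h2, ← map_mul]
  congr 1; ring

lemma Dp_neg {r : ℕ} {x : RatFunc ℚ} (hx : Dp p r x) : Dp p r (-x) := by
  obtain ⟨a, b, hb, h⟩ := hx
  exact ⟨-a, b, hb, by rw [neg_mul, h, ← map_neg]; congr 1; ring⟩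

lemma Dp_sub {r : ℕ} {x y : RatFunc ℚ} (hx : Dp p r x) (hy : Dp p r y) : Dp p r (x - y) := by
  rw [sub_eq_add_neg]; exact Dp_add hx (Dp_neg hy)

lemma Dp_of_eq {r s : ℕ} {x y : RatFunc ℚ} (hx : Dp p r x) (h : r = s) (h2 : x = y) :
    Dp p s y := h ▸ h2 ▸ hx

lemma Dp0_AM (a : Polynomial ℚ) : Dp p 0 (AM a) := ⟨a, 1, isCoprime_one_left, by simp⟩

lemma Dp_one : Dp p 0 (1 : RatFunc ℚ) := by simpa using Dp0_AM 1

lemma coprime_ne_zero (hp : p.Prime) {b : Polynomial ℚ} (hb : IsCoprime b (qIntP p)) :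
    b ≠ 0 := by
  rintro rfl
  exact (qIntP_irreducible hp).not_isUnit (isCoprime_zero_left.mp hb)

lemma Dp0_inv (hp : p.Prime) {b : Polynomial ℚ} (hb : IsCoprime b (qIntP p)) :
    Dp p 0 (AM b)⁻¹ :=
  ⟨1, b, hb, by
    rw [inv_mul_cancel₀ (RatFunc.algebraMap_ne_zero (coprime_ne_zero hp hb))]; simp⟩

lemma Dp1_ep : Dp p 1 (ep p) := ⟨1, 1, isCoprime_one_left, by simp [ep]⟩

lemma Dp0_ep : Dp p 0 (ep p) := Dp0_AM _

lemma Dp_sum {ι : Type*} {r : ℕ} {s : Finset ι} {f : ι → RatFunc ℚ}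
    (h : ∀ i ∈ s, Dp p r (f i)) : Dp p r (∑ i ∈ s, f i) := by
  induction s using Finset.cons_induction with
  | empty => simpa using Dp_zero r
  | cons a s ha ih =>
    rw [Finset.sum_cons]
    exact Dp_add (h a (Finset.mem_cons_self a s)) (ih fun i hi => h i (Finset.mem_cons_of_mem hi))

lemma Dp_prod {ι : Type*} {s : Finset ι} {f : ι → RatFunc ℚ}
    (h : ∀ i ∈ s, Dp p 0 (f i)) : Dp p 0 (∏ i ∈ s, f i) := by
  induction s using Finset.cons_induction with
  | empty => simpa using Dp_one
  | cons a s ha ih =>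
    rw [Finset.prod_cons]
    exact Dp_mul (r := 0) (s := 0) (h a (Finset.mem_cons_self a s)) (ih fun i hi => h i (Finset.mem_cons_of_mem hi))

lemma Dp_prod_one_add {ι : Type*} {s : Finset ι} {t : ι → RatFunc ℚ}
    (ht : ∀ i ∈ s, Dp p 0 (t i)) :
    Dp p 2 (∏ i ∈ s, (1 + ep p * t i) - (1 + ep p * ∑ i ∈ s, t i)) := by
  induction s using Finset.cons_induction with
  | empty => simpa using Dp_zero 2
  | cons a s ha ih =>
    rw [Finset.prod_cons, Finset.sum_cons]
    have h1 := ih fun i hi => ht i (Finset.mem_cons_of_mem hi)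
    have hta := ht a (Finset.mem_cons_self a s)
    have key : (1 + ep p * t a) * ∏ i ∈ s, (1 + ep p * t i)
          - (1 + ep p * (t a + ∑ i ∈ s, t i))
        = (1 + ep p * t a) * (∏ i ∈ s, (1 + ep p * t i) - (1 + ep p * ∑ i ∈ s, t i))
          + ep p * (ep p * (t a * ∑ i ∈ s, t i)) := by ring
    rw [key]
    refine Dp_add (Dp_of_eq (Dp_mul (r := 0) ?_ h1) (by norm_num) rfl)
      (Dp_of_eq (Dp_mul Dp1_ep (Dp_mul Dp1_ep (Dp_mul hta (Dp_sum fun i hi => ht i (Finset.mem_cons_of_mem hi))))) (by norm_num) rfl)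
    exact Dp_add Dp_one (Dp_mul (r := 0) (s := 0) Dp0_ep hta)

lemma Dp_prod_sub {ι : Type*} {s : Finset ι} {x y : ι → RatFunc ℚ}
    (hx : ∀ i ∈ s, Dp p 0 (x i)) (hy : ∀ i ∈ s, Dp p 0 (y i))
    (hxy : ∀ i ∈ s, Dp p 2 (x i - y i)) :
    Dp p 2 (∏ i ∈ s, x i - ∏ i ∈ s, y i) := by
  induction s using Finset.cons_induction with
  | empty => simpa using Dp_zero 2
  | cons a s ha ih =>
    rw [Finset.prod_cons, Finset.prod_cons]
    have key : x a * ∏ i ∈ s, x i - y a * ∏ i ∈ s, y i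
        = (x a - y a) * ∏ i ∈ s, x i + y a * (∏ i ∈ s, x i - ∏ i ∈ s, y i) := by ring
    rw [key]
    refine Dp_add (Dp_of_eq
        (Dp_mul (hxy a (Finset.mem_cons_self a s)) (Dp_prod fun i hi => hx i (Finset.mem_cons_of_mem hi))) (by norm_num) rfl)
      (Dp_of_eq (Dp_mul (hy a (Finset.mem_cons_self a s))
        (ih (fun i hi => hx i (Finset.mem_cons_of_mem hi)) (fun i hi => hy i (Finset.mem_cons_of_mem hi))
          (fun i hi => hxy i (Finset.mem_cons_of_mem hi)))) (by norm_num) rfl)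

/-- `1 - q^i` in `ℚ(q)`. -/
def uu (i : ℕ) : RatFunc ℚ := AM (1 - X ^ i)

lemma uu_ne_zero {i : ℕ} (hi : 1 ≤ i) : uu i ≠ 0 :=
  RatFunc.algebraMap_ne_zero (one_sub_X_pow_ne_zero hi)

lemma qqPoch_ne_zero (n : ℕ) : qqPoch n ≠ 0 := by
  refine RatFunc.algebraMap_ne_zero (Finset.prod_ne_zero_iff.2 fun j _ => ?_)
  exact one_sub_X_pow_ne_zero (by omega)

lemma num_factor (p i : ℕ) : AM (1 - X ^ (p + i)) = uu i + RatFunc.X ^ i * ep p := by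
  rw [uu, ep, ← RatFunc.algebraMap_X, ← map_pow, ← map_mul, ← map_add]
  congr 1
  ring

lemma den_factor {p i : ℕ} (h : i + 1 ≤ p - 1) (hp : 2 ≤ p) :
    RatFunc.X ^ (i + 1) * AM (1 - X ^ (p - 1 - i)) = ep p - uu (i + 1) := by
  rw [uu, ep, ← RatFunc.algebraMap_X, ← map_pow, ← map_mul, ← map_sub]
  congr 1
  have he : (i + 1) + (p - 1 - i) = p := by omega
  rw [mul_one_sub, ← pow_add, he]
  ring

lemma sum_range_succ_choose (k : ℕ) : ∑ i ∈ Finset.range k, (i + 1) = (k + 1).choose 2 := by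
  induction k with
  | zero => simp
  | succ n ih =>
    have h := Nat.choose_succ_succ (n + 1) 1
    norm_num at h
    rw [Finset.sum_range_succ, ih, h]
    omega

lemma mul_mul_inv_helper {K : Type*} [Field K] (t a b : K) (ht : t ≠ 0) :
    t * a * (t * b)⁻¹ = a / b := by
  rcases eq_or_ne b 0 with rfl | hb
  · simp
  · field_simp

lemma div_ratio_helper {K : Type*} [Field K] (A3 Ak D N : K)
    (h2 : Ak ≠ 0) (h3 : A3 ≠ 0) (hD : D ≠ 0) :
    A3 * D * N / (Ak * (A3 * D)) * (A3 * D / (Ak * A3))⁻¹ = N / D := by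
  field_simp

lemma den_prod_eq {p k : ℕ} (hp : 2 ≤ p) (hk : k ≤ p - 1) :
    ∏ i ∈ Finset.range k, (ep p - uu (i + 1)) =
      RatFunc.X ^ ((k + 1).choose 2) * ∏ i ∈ Finset.range k, AM (1 - X ^ (p - 1 - i)) := by
  have h : ∀ i ∈ Finset.range k, ep p - uu (i + 1)
      = RatFunc.X ^ (i + 1) * AM (1 - X ^ (p - 1 - i)) := by
    intro i hi
    rw [Finset.mem_range] at hi
    exact (den_factor (by omega) hp).symm
  rw [Finset.prod_congr rfl h, Finset.prod_mul_distrib,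
    Finset.prod_pow_eq_pow_sum, sum_range_succ_choose]

lemma lhs_eq {p k : ℕ} (hp : p.Prime) (hk1 : 1 ≤ k) (hk : k ≤ p - 1) :
    qbin (p - 1 + k) k * (qbin (p - 1) k)⁻¹ =
      RatFunc.X ^ ((k + 1).choose 2) * (∏ i ∈ Finset.range k, (uu i + RatFunc.X ^ i * ep p)) *
        (∏ i ∈ Finset.range k, (ep p - uu (i + 1)))⁻¹ := by
  have hp2 : 2 ≤ p := hp.two_le
  have step1 : qqPoch (p - 1 + k) = qqPoch (p - 1) * AM (∏ i ∈ Finset.range k, (1 - X ^ (p + i))) := by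
    conv_lhs => rw [qqPoch, Finset.prod_range_add]
    rw [map_mul, qqPoch]
    congr 1
    rw [map_prod, map_prod]
    refine Finset.prod_congr rfl fun i _ => ?_
    rw [show p - 1 + i + 1 = p + i from by omega]
  have step2 : qqPoch (p - 1) = qqPoch (p - 1 - k) * AM (∏ i ∈ Finset.range k, (1 - X ^ (p - k + i))) := by
    conv_lhs => rw [qqPoch, show p - 1 = (p - 1 - k) + k from by omega, Finset.prod_range_add]
    rw [map_mul, qqPoch]
    congr 1
    rw [map_prod, map_prod]
    refine Finset.prod_congr rfl fun i hi => ?_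
    rw [Finset.mem_range] at hi
    rw [show p - 1 - k + i + 1 = p - k + i from by omega]
  have hAMD : AM (∏ i ∈ Finset.range k, (1 - X ^ (p - k + i))) ≠ 0 := by
    refine RatFunc.algebraMap_ne_zero (Finset.prod_ne_zero_iff.2 fun j _ => ?_)
    exact one_sub_X_pow_ne_zero (by omega)
  have step3 : qbin (p - 1 + k) k * (qbin (p - 1) k)⁻¹ =
      AM (∏ i ∈ Finset.range k, (1 - X ^ (p + i))) /
        AM (∏ i ∈ Finset.range k, (1 - X ^ (p - k + i))) := by
    rw [qbin, if_pos (by omega : k ≤ p - 1 + k), qbin, if_pos hk,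
      show p - 1 + k - k = p - 1 from by omega, step1, step2]
    exact div_ratio_helper _ _ _ _ (qqPoch_ne_zero k) (qqPoch_ne_zero (p - 1 - k)) hAMD
  have step4 : AM (∏ i ∈ Finset.range k, (1 - X ^ (p - k + i))) =
      ∏ i ∈ Finset.range k, AM (1 - X ^ (p - 1 - i)) := by
    rw [map_prod, ← Finset.prod_range_reflect (fun j => AM (1 - X ^ (p - k + j))) k]
    refine Finset.prod_congr rfl fun i hi => ?_
    rw [Finset.mem_range] at hi
    rw [show p - k + (k - 1 - i) = p - 1 - i from by omega]
  have hXT : (RatFunc.X : RatFunc ℚ) ^ ((k + 1).choose 2) ≠ 0 :=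
    pow_ne_zero _ RatFunc.X_ne_zero
  rw [step3, step4, map_prod,
    Finset.prod_congr rfl fun i (_ : i ∈ Finset.range k) => num_factor p i,
    den_prod_eq hp2 hk,
    mul_mul_inv_helper _ _ _ hXT]

lemma Dp0_qpow (p n : ℕ) : Dp p 0 ((RatFunc.X : RatFunc ℚ) ^ n) := by
  rw [← RatFunc.algebraMap_X, ← map_pow]
  exact Dp0_AM _

lemma Dp0_neg_one_pow (p n : ℕ) : Dp p 0 ((-1 : RatFunc ℚ) ^ n) := by
  have : ((-1 : RatFunc ℚ) ^ n) = AM ((-1) ^ n) := by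
    rw [map_pow, map_neg, map_one]
  rw [this]
  exact Dp0_AM _

lemma Dp0_uu (i : ℕ) {p : ℕ} : Dp p 0 (uu i) := Dp0_AM _

lemma Dp0_uu_inv {p i : ℕ} (hp : p.Prime) (h1 : 1 ≤ i) (h2 : i ≤ p - 1) :
    Dp p 0 (uu i)⁻¹ :=
  Dp0_inv hp (coprime_one_sub_X_pow hp h1 h2)

lemma ep_sub_uu_eq {p i : ℕ} (hp : 2 ≤ p) (h : i + 1 ≤ p - 1) :
    ep p - uu (i + 1) = AM (X ^ (i + 1) * (1 - X ^ (p - 1 - i))) := by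
  rw [← den_factor h hp, map_mul, map_pow, RatFunc.algebraMap_X]

lemma ep_sub_uu_ne_zero {p i : ℕ} (hp : 2 ≤ p) (h : i + 1 ≤ p - 1) :
    ep p - uu (i + 1) ≠ 0 := by
  rw [ep_sub_uu_eq hp h]
  refine RatFunc.algebraMap_ne_zero (mul_ne_zero (pow_ne_zero _ X_ne_zero) ?_)
  exact one_sub_X_pow_ne_zero (by omega)

lemma Dp0_ep_sub_uu_inv {p i : ℕ} (hp : p.Prime) (h : i + 1 ≤ p - 1) :
    Dp p 0 (ep p - uu (i + 1))⁻¹ := by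
  rw [ep_sub_uu_eq hp.two_le h]
  refine Dp0_inv hp (IsCoprime.mul_left ?_ ?_)
  · exact (coprime_X_qIntP hp).pow_left
  · exact coprime_one_sub_X_pow hp (by omega) (by omega)

lemma key_cong {p m : ℕ} (hp : p.Prime) (hk : m + 1 ≤ p - 1) :
    Dp p 3 (RatFunc.X ^ ((m + 2).choose 2) *
        (∏ i ∈ Finset.range (m + 1), (uu i + RatFunc.X ^ i * ep p)) *
        (∏ i ∈ Finset.range (m + 1), (ep p - uu (i + 1)))⁻¹
      - (-1 : RatFunc ℚ) ^ (m + 1) * RatFunc.X ^ ((m + 2).choose 2) * (ep p * (uu (m + 1))⁻¹) *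
        (1 + ep p * (uu (m + 1))⁻¹ +
          ep p * ∑ i ∈ Finset.range m, (1 + RatFunc.X ^ (i + 1)) * (uu (i + 1))⁻¹)) := by
  have hp2 : 2 ≤ p := hp.two_le
  set q : RatFunc ℚ := RatFunc.X with hq
  set e : RatFunc ℚ := ep p with he
  -- bounds
  have hbd : ∀ i ∈ Finset.range (m + 1), 1 ≤ i + 1 ∧ i + 1 ≤ p - 1 := by
    intro i hi
    rw [Finset.mem_range] at hi
    omega
  have hbd' : ∀ i ∈ Finset.range m, 1 ≤ i + 1 ∧ i + 1 ≤ p - 1 := by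
    intro i hi
    rw [Finset.mem_range] at hi
    omega
  have huu_ne : ∀ i ∈ Finset.range (m + 1), uu (i + 1) ≠ 0 :=
    fun i hi => uu_ne_zero (hbd i hi).1
  -- abbreviations
  set N : RatFunc ℚ := ∏ i ∈ Finset.range m, (uu (i + 1) + q ^ (i + 1) * e) with hN
  set U' : RatFunc ℚ := ∏ i ∈ Finset.range m, uu (i + 1) with hU'
  set Uk : RatFunc ℚ := ∏ i ∈ Finset.range (m + 1), uu (i + 1) with hUk
  set S' : RatFunc ℚ := ∑ i ∈ Finset.range m, q ^ (i + 1) * (uu (i + 1))⁻¹ with hS'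
  set S'' : RatFunc ℚ := ∑ i ∈ Finset.range m, (uu (i + 1))⁻¹ with hS''
  set S : RatFunc ℚ := ∑ i ∈ Finset.range (m + 1), (uu (i + 1))⁻¹ with hS
  set B : RatFunc ℚ := U' * (1 + e * S') with hB
  set A' : RatFunc ℚ := (-1 : RatFunc ℚ) ^ (m + 1) * Uk⁻¹ * (1 + e * S) with hA'
  set Dinv : RatFunc ℚ := ∏ i ∈ Finset.range (m + 1), (e - uu (i + 1))⁻¹ with hDinv
  have hU'ne : U' ≠ 0 := Finset.prod_ne_zero_iff.2 fun i hi => uu_ne_zero (hbd' i hi).1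
  have hUkne : Uk ≠ 0 := Finset.prod_ne_zero_iff.2 huu_ne
  have huum : uu (m + 1) ≠ 0 := uu_ne_zero (by omega)
  -- numerator splits off e
  have numsplit : (∏ i ∈ Finset.range (m + 1), (uu i + q ^ i * e)) = e * N := by
    rw [Finset.prod_range_succ']
    have h0 : uu 0 + q ^ 0 * e = e := by
      rw [show uu 0 = 0 by rw [uu]; simp, pow_zero, one_mul, zero_add]
    rw [h0, mul_comm]
  -- inverse of denominator as product of inverses
  have dinvsplit : (∏ i ∈ Finset.range (m + 1), (e - uu (i + 1)))⁻¹ = Dinv := by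
    rw [hDinv, ← Finset.prod_inv_distrib]
  -- Dp 0 facts
  have hDinv0 : Dp p 0 Dinv :=
    Dp_prod fun i hi => Dp0_ep_sub_uu_inv hp (hbd i hi).2
  have hB0 : Dp p 0 B := by
    refine Dp_mul (r := 0) (s := 0) (Dp_prod fun i _ => Dp0_uu _) ?_
    refine Dp_add Dp_one (Dp_mul (r := 0) (s := 0) Dp0_ep ?_)
    exact Dp_sum fun i hi =>
      Dp_mul (r := 0) (s := 0) (Dp0_qpow p (i + 1)) (Dp0_uu_inv hp (hbd' i hi).1 (hbd' i hi).2)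
  have hS0 : Dp p 0 S :=
    Dp_sum fun i hi => Dp0_uu_inv hp (hbd i hi).1 (hbd i hi).2
  have hS'0 : Dp p 0 S' :=
    Dp_sum fun i hi =>
      Dp_mul (r := 0) (s := 0) (Dp0_qpow p (i + 1)) (Dp0_uu_inv hp (hbd' i hi).1 (hbd' i hi).2)
  -- Claim B : Dp 2 (N - B)
  have hNB : Dp p 2 (N - B) := by
    have hNeq : N = U' * ∏ i ∈ Finset.range m, (1 + e * (q ^ (i + 1) * (uu (i + 1))⁻¹)) := by
      rw [hU', ← Finset.prod_mul_distrib]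
      refine Finset.prod_congr rfl fun i hi => ?_
      have h := uu_ne_zero (hbd' i hi).1
      field_simp
    rw [hNeq, hB, ← mul_sub]
    refine Dp_of_eq (Dp_mul (r := 0) (s := 2) (Dp_prod fun i _ => Dp0_uu _) ?_) (by norm_num) rfl
    exact Dp_prod_one_add fun i hi =>
      Dp_mul (r := 0) (s := 0) (Dp0_qpow p (i + 1)) (Dp0_uu_inv hp (hbd' i hi).1 (hbd' i hi).2)
  -- Claim A : Dp 2 (Dinv - A')
  have hDA : Dp p 2 (Dinv - A') := by
    set y : ℕ → RatFunc ℚ := fun i => -((uu (i + 1))⁻¹ * (1 + e * (uu (i + 1))⁻¹)) with hy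
    have hxy : ∀ i ∈ Finset.range (m + 1), Dp p 2 ((e - uu (i + 1))⁻¹ - y i) := by
      intro i hi
      have hv := uu_ne_zero (hbd i hi).1
      have hw : e - uu (i + 1) ≠ 0 := ep_sub_uu_ne_zero hp2 (hbd i hi).2
      have hid : (e - uu (i + 1))⁻¹ - y i =
          e * (e * ((uu (i + 1))⁻¹ * ((uu (i + 1))⁻¹ * (e - uu (i + 1))⁻¹))) := by
        rw [hy]
        field_simp
        ring
      rw [hid]
      refine Dp_of_eq (Dp_mul Dp1_ep (Dp_mul Dp1_ep (Dp_mul (r := 0) (s := 0)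
        (Dp0_uu_inv hp (hbd i hi).1 (hbd i hi).2)
        (Dp_mul (r := 0) (s := 0) (Dp0_uu_inv hp (hbd i hi).1 (hbd i hi).2)
          (Dp0_ep_sub_uu_inv hp (hbd i hi).2))))) (by norm_num) rfl
    have hprod : Dp p 2 (Dinv - ∏ i ∈ Finset.range (m + 1), y i) := by
      refine Dp_prod_sub (fun i hi => Dp0_ep_sub_uu_inv hp (hbd i hi).2) ?_ hxy
      intro i hi
      exact Dp_neg (Dp_mul (r := 0) (s := 0) (Dp0_uu_inv hp (hbd i hi).1 (hbd i hi).2)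
        (Dp_add Dp_one (Dp_mul (r := 0) (s := 0) Dp0_ep
          (Dp0_uu_inv hp (hbd i hi).1 (hbd i hi).2))))
    have h1 : ∀ i ∈ Finset.range (m + 1), y i
        = (-1) * ((uu (i + 1))⁻¹ * (1 + e * (uu (i + 1))⁻¹)) := by
      intro i _
      rw [hy]
      ring
    have hyprod : ∏ i ∈ Finset.range (m + 1), y i =
        (-1 : RatFunc ℚ) ^ (m + 1) * Uk⁻¹ *
          ∏ i ∈ Finset.range (m + 1), (1 + e * (uu (i + 1))⁻¹) := by
      rw [Finset.prod_congr rfl h1, Finset.prod_mul_distrib, Finset.prod_mul_distrib,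
        Finset.prod_const, Finset.card_range, hUk, Finset.prod_inv_distrib]
      ring
    have hUkcop : IsCoprime (∏ i ∈ Finset.range (m + 1), (1 - X ^ (i + 1))) (qIntP p) :=
      IsCoprime.prod_left fun i hi =>
        coprime_one_sub_X_pow hp (hbd i hi).1 (hbd i hi).2
    have hUkAM : Uk = AM (∏ i ∈ Finset.range (m + 1), (1 - X ^ (i + 1))) := by
      rw [hUk, map_prod]
      rfl
    have hUkinv0 : Dp p 0 Uk⁻¹ := by
      rw [hUkAM]
      exact Dp0_inv hp hUkcop
    have hid2 : Dinv - A' = (Dinv - ∏ i ∈ Finset.range (m + 1), y i) +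
        ((-1 : RatFunc ℚ) ^ (m + 1) * Uk⁻¹) *
          ((∏ i ∈ Finset.range (m + 1), (1 + e * (uu (i + 1))⁻¹)) - (1 + e * S)) := by
      rw [hyprod, hA']
      ring
    rw [hid2]
    refine Dp_add hprod (Dp_of_eq (Dp_mul (r := 0) (s := 2)
      (Dp_mul (r := 0) (s := 0) (Dp0_neg_one_pow p (m + 1)) hUkinv0) ?_) (by norm_num) rfl)
    exact Dp_prod_one_add fun i hi => Dp0_uu_inv hp (hbd i hi).1 (hbd i hi).2
  -- exact bookkeeping identities
  have hsum_split : S = S'' + (uu (m + 1))⁻¹ := by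
    rw [hS, hS'', Finset.sum_range_succ]
  have hUk_split : Uk = U' * uu (m + 1) := by
    rw [hUk, hU', Finset.prod_range_succ]
  have hsum2 : ∑ i ∈ Finset.range m, (1 + q ^ (i + 1)) * (uu (i + 1))⁻¹ = S'' + S' := by
    rw [hS'', hS', ← Finset.sum_add_distrib]
    exact Finset.sum_congr rfl fun i _ => by ring
  set T : ℕ := (m + 2).choose 2 with hT
  set R : RatFunc ℚ := (-1 : RatFunc ℚ) ^ (m + 1) * q ^ T * (e * (uu (m + 1))⁻¹) *
      (1 + e * (uu (m + 1))⁻¹ +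
        e * ∑ i ∈ Finset.range m, (1 + q ^ (i + 1)) * (uu (i + 1))⁻¹) with hR
  have hE2 : q ^ T * e * (B * A') - R =
      (-1 : RatFunc ℚ) ^ (m + 1) *
        (q ^ T * (e * (e * (e * ((uu (m + 1))⁻¹ * (S' * S)))))) := by
    rw [hR, hB, hA', hUk_split, hsum2, hsum_split]
    field_simp
    ring
  rw [numsplit, dinvsplit]
  have hfinal : q ^ T * (e * N) * Dinv - R =
      q ^ T * e * ((N - B) * Dinv + B * (Dinv - A')) + (q ^ T * e * (B * A') - R) := by
    ring
  rw [hfinal]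
  refine Dp_add (Dp_of_eq (Dp_mul (Dp_mul (r := 0) (s := 1) (Dp0_qpow p T) Dp1_ep)
    (Dp_add (Dp_mul (r := 2) (s := 0) hNB hDinv0) (Dp_mul (r := 0) (s := 2) hB0 hDA)))
    (by norm_num) rfl) ?_
  rw [hE2]
  exact Dp_of_eq (Dp_mul (r := 0) (Dp0_neg_one_pow p (m + 1)) (Dp_mul (r := 0) (Dp0_qpow p T)
    (Dp_mul Dp1_ep (Dp_mul Dp1_ep (Dp_mul Dp1_ep (Dp_mul (r := 0) (s := 0)
      (Dp0_uu_inv hp (by omega) (by omega))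
      (Dp_mul (r := 0) (s := 0) hS'0 hS0))))))) (by norm_num) rfl

lemma poly_geom (n : ℕ) : (qIntP n) * (1 - X) = 1 - X ^ n := by
  have h := geom_sum_mul (X : ℚ[X]) n
  rw [qIntP]
  linear_combination -h

lemma uu_eq_qN (n : ℕ) : uu n = qN n * AM (1 - X) := by
  rw [uu, qN, ← map_mul, poly_geom]

lemma AM_one_sub_X_ne_zero : AM (1 - X : ℚ[X]) ≠ 0 := by
  have h := one_sub_X_pow_ne_zero (i := 1) le_rfl
  rw [pow_one] at h
  exact RatFunc.algebraMap_ne_zero h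

lemma div_qN (p : ℕ) {j : ℕ} (hj : 1 ≤ j) : qN p / qN j = ep p * (uu j)⁻¹ := by
  rw [show ep p = uu p from rfl, uu_eq_qN p, uu_eq_qN j,
    show qN p * AM (1 - X) * (qN j * AM (1 - X))⁻¹
      = AM (1 - X) * qN p * (AM (1 - X) * qN j)⁻¹ from by ring,
    mul_mul_inv_helper _ _ _ AM_one_sub_X_ne_zero]

lemma qCong_of_Dp {p : ℕ} (hp : p.Prime) {x y : RatFunc ℚ} (h : Dp p 3 (x - y)) :
    qCong p 3 x y := by
  obtain ⟨a, b, hb, hab⟩ := h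
  refine ⟨(1 - X) ^ 3 * a, b, hb, ?_⟩
  rw [hab]
  congr 1
  rw [show (1 - X ^ p : ℚ[X]) = qIntP p * (1 - X) from (poly_geom p).symm, mul_pow]
  ring

/-- For a prime `p` and `1 ≤ k ≤ p-1`:
`binom_q(p−1+k, k) · binom_q(p−1, k)⁻¹ ≡
  ((-1)^k q^{C(k+1,2)} [p]_q/[k]_q)(1 + [p]_q/[k]_q + [p]_q ∑_{j=1}^{k-1} (1+q^j)/[j]_q)
(mod [p]_q³)`. -/
theorem qbin_ratio (p : ℕ) (hp : p.Prime)
    (k : ℕ) (hk1 : 1 ≤ k) (hk : k ≤ p - 1) :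
    qCong p 3 (qbin (p - 1 + k) k * (qbin (p - 1) k)⁻¹)
      ((-1 : RatFunc ℚ) ^ k * (RatFunc.X : RatFunc ℚ) ^ ((k + 1).choose 2) * qN p / qN k *
        (1 + qN p / qN k +
          qN p * ∑ j ∈ Finset.Icc 1 (k - 1), (1 + (RatFunc.X : RatFunc ℚ) ^ j) / qN j)) := by
  obtain ⟨m, rfl⟩ : ∃ m, k = m + 1 := ⟨k - 1, by omega⟩
  have hmk : m + 1 ≤ p - 1 := hk
  have h1 := lhs_eq hp (k := m + 1) (by omega) hk
  have h2 := key_cong hp (m := m) hmk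
  have hIccsum : qN p * ∑ j ∈ Finset.Icc 1 (m + 1 - 1), (1 + (RatFunc.X : RatFunc ℚ) ^ j) / qN j
      = ep p * ∑ i ∈ Finset.range m, (1 + (RatFunc.X : RatFunc ℚ) ^ (i + 1)) * (uu (i + 1))⁻¹ := by
    rw [show m + 1 - 1 = m from rfl, ← Finset.Ico_add_one_right_eq_Icc, Finset.sum_Ico_eq_sum_range,
      show m + 1 - 1 = m from rfl, Finset.mul_sum, Finset.mul_sum]
    refine Finset.sum_congr rfl fun i _ => ?_
    have h := div_qN p (j := 1 + i) (by omega)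
    calc qN p * ((1 + (RatFunc.X : RatFunc ℚ) ^ (1 + i)) / qN (1 + i))
        = (1 + (RatFunc.X : RatFunc ℚ) ^ (1 + i)) * (qN p / qN (1 + i)) := by ring
      _ = (1 + (RatFunc.X : RatFunc ℚ) ^ (1 + i)) * (ep p * (uu (1 + i))⁻¹) := by rw [h]
      _ = ep p * ((1 + (RatFunc.X : RatFunc ℚ) ^ (i + 1)) * (uu (i + 1))⁻¹) := by
          rw [show 1 + i = i + 1 from by omega]; ring
  refine qCong_of_Dp hp ?_
  rw [h1, mul_div_assoc, div_qN p (j := m + 1) (by omega), hIccsum]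
  exact h2
end
end

section
/- Let p be an odd prime and a a positive integer. Then the Gaussian q-binomial coefficient satisfies binom_q(ap−1, p−1) ≡ q^{(a−1)·C(p,2)} (mod [p]_q^2). -/
open Polynomial Finset

noncomputable section

lemma deriv_prod_finset {ι : Type*} [DecidableEq ι] (s : Finset ι) (f : ι → Polynomial ℚ) :
    derivative (∏ i ∈ s, f i) = ∑ i ∈ s, (∏ j ∈ s.erase i, f j) * derivative (f i) := by
  induction s using Finset.induction_on with
  | empty => simp
  | insert a s ha ih =>
    rw [Finset.prod_insert ha, derivative_mul, ih, Finset.sum_insert ha,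
      Finset.erase_insert ha, Finset.mul_sum]
    congr 1
    · exact mul_comm _ _
    · refine Finset.sum_congr rfl fun i hi => ?_
      rw [Finset.erase_insert_of_ne (by rintro rfl; exact ha hi),
        Finset.prod_insert (fun h => ha (Finset.mem_of_mem_erase h))]
      ring

lemma sq_dvd_aux {π f : Polynomial ℚ} (hsep : π.Separable)
    (h1 : π ∣ f) (h2 : π ∣ derivative f) : π ^ 2 ∣ f := by
  obtain ⟨g, rfl⟩ := h1
  rw [derivative_mul] at h2
  have h3 : π ∣ derivative π * g := by
    have h4 : π ∣ (derivative π * g + π * derivative g) - π * derivative g :=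
      h2.sub (Dvd.intro _ rfl)
    simpa using h4
  have h5 : π ∣ g := hsep.dvd_of_dvd_mul_right (by rwa [mul_comm] at h3)
  obtain ⟨h, rfl⟩ := h5
  exact ⟨h, by ring⟩

lemma pair_sum {K : Type*} [Field K] [CharZero K] (p : ℕ) (hp3 : 3 ≤ p) (θ : K)
    (hθp : θ ^ p = 1) (hord : ∀ k, 0 < k → k < p → θ ^ k ≠ 1) :
    (2 : K) * (∑ j ∈ range (p - 1), θ ^ (j + 1) * (1 - θ ^ (j + 1))⁻¹) =
      -((p - 1 : ℕ) : K) := by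
  set g : ℕ → K := fun j => θ ^ (j + 1) * (1 - θ ^ (j + 1))⁻¹ with hg
  have hrefl : ∑ j ∈ range (p - 1), g (p - 1 - 1 - j) = ∑ j ∈ range (p - 1), g j :=
    Finset.sum_range_reflect g (p - 1)
  have hpair : ∀ j ∈ range (p - 1), g j + g (p - 1 - 1 - j) = -1 := by
    intro j hj
    rw [Finset.mem_range] at hj
    have hl : p - 1 - 1 - j + 1 = p - (j + 1) := by omega
    rw [hg]
    simp only []
    rw [hl]
    have hk1 : (0:ℕ) < j + 1 := by omega
    have hk2 : j + 1 < p := by omega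
    have hl1 : (0:ℕ) < p - (j+1) := by omega
    have hl2 : p - (j+1) < p := by omega
    have hu : θ ^ (j+1) ≠ 1 := hord _ hk1 hk2
    have hw : θ ^ (p - (j+1)) ≠ 1 := hord _ hl1 hl2
    have huw : θ ^ (j+1) * θ ^ (p - (j+1)) = 1 := by
      rw [← pow_add, show j + 1 + (p - (j+1)) = p by omega, hθp]
    have hu' : (1:K) - θ ^ (j+1) ≠ 0 := sub_ne_zero.mpr (Ne.symm hu)
    have hw' : (1:K) - θ ^ (p - (j+1)) ≠ 0 := sub_ne_zero.mpr (Ne.symm hw)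
    field_simp
    linear_combination (-1 : K) * huw
  calc (2:K) * (∑ j ∈ range (p-1), g j)
      = (∑ j ∈ range (p-1), g j) + ∑ j ∈ range (p-1), g (p - 1 - 1 - j) := by
        rw [hrefl]; ring
    _ = ∑ j ∈ range (p-1), (g j + g (p - 1 - 1 - j)) := by
        rw [← Finset.sum_add_distrib]
    _ = ∑ j ∈ range (p-1), (-1 : K) := Finset.sum_congr rfl hpair
    _ = -((p - 1 : ℕ) : K) := by simp

-- main divisibility
set_option maxHeartbeats 1000000 in
lemma key_dvd (p a : ℕ) (hp : p.Prime) (hodd : Odd p) (ha : 0 < a) :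
    (qIntP p ^ 2 ∣
      (∏ j ∈ range (p - 1), (1 - (X : Polynomial ℚ) ^ ((a - 1) * p + (j + 1)))) -
        X ^ ((a - 1) * p.choose 2) * ∏ j ∈ range (p - 1), (1 - X ^ (j + 1))) ∧
      ¬ qIntP p ∣ ∏ j ∈ range (p - 1), (1 - (X : Polynomial ℚ) ^ (j + 1)) := by
  haveI : Fact p.Prime := ⟨hp⟩
  obtain ⟨t, ht⟩ : ∃ t, p = 2 * t + 1 := hodd
  have hp3 : 3 ≤ p := by have := hp.two_le; omega
  have hchoose : p.choose 2 = p * t := by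
    rw [Nat.choose_two_right, show p - 1 = 2 * t by omega,
      show p * (2 * t) = 2 * (p * t) by ring, Nat.mul_div_cancel_left _ (by norm_num)]
  set m := (a - 1) * p.choose 2 with hm
  have hcyc : qIntP p = cyclotomic p ℚ := by rw [cyclotomic_prime]; rfl
  have hirr : Irreducible (qIntP p) := hcyc ▸ cyclotomic.irreducible_rat hp.pos
  haveI : Fact (Irreducible (qIntP p)) := ⟨hirr⟩
  set K := AdjoinRoot (qIntP p) with hK
  set θ : K := AdjoinRoot.root (qIntP p) with hθ
  set mk := AdjoinRoot.mk (qIntP p) with hmk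
  haveI : CharZero K := charZero_of_injective_algebraMap (algebraMap ℚ K).injective
  have hsum : ∑ i ∈ range p, θ ^ i = 0 := by
    have h : mk (∑ i ∈ range p, X ^ i) = 0 := AdjoinRoot.mk_self
    rw [map_sum] at h
    simp only [map_pow, hmk, AdjoinRoot.mk_X] at h
    exact h
  have hθp : θ ^ p = 1 := by
    have h := geom_sum_mul θ p
    rw [hsum, zero_mul] at h
    linear_combination -h
  have hθ1 : θ ≠ 1 := by
    intro h
    rw [h] at hsum
    simp at hsum
    exact hp.ne_zero (by exact_mod_cast hsum)
  have hθ0 : θ ≠ 0 := by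
    intro h
    rw [h, zero_pow hp.ne_zero] at hθp
    exact zero_ne_one hθp
  have hord : ∀ k, 0 < k → k < p → θ ^ k ≠ 1 := by
    intro k hk1 hk2 hcon
    have hd := orderOf_dvd_of_pow_eq_one hcon
    have hd2 := orderOf_dvd_of_pow_eq_one hθp
    rcases (Nat.Prime.eq_one_or_self_of_dvd hp _ hd2) with h | h
    · exact hθ1 (orderOf_eq_one_iff.mp h)
    · have := Nat.le_of_dvd hk1 (h ▸ hd)
      omega
  have hred : ∀ n, θ ^ ((a - 1) * p + n) = θ ^ n := by
    intro n
    rw [pow_add, mul_comm (a-1) p, pow_mul, hθp, one_pow, one_mul]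
  have hθm : θ ^ m = 1 := by
    rw [hm, hchoose, show (a - 1) * (p * t) = p * ((a - 1) * t) by ring, pow_mul, hθp, one_pow]
  set Gpoly : Polynomial ℚ := ∏ j ∈ range (p - 1), (1 - X ^ ((a - 1) * p + (j + 1))) with hG
  set Hpoly : Polynomial ℚ := ∏ j ∈ range (p - 1), (1 - X ^ (j + 1)) with hH
  set Hv : K := ∏ j ∈ range (p - 1), (1 - θ ^ (j + 1)) with hHv
  have hfac : ∀ j, j ∈ range (p - 1) → (1 : K) - θ ^ (j + 1) ≠ 0 := by
    intro j hj
    rw [Finset.mem_range] at hj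
    exact sub_ne_zero.mpr (Ne.symm (hord _ (by omega) (by omega)))
  have hHvne : Hv ≠ 0 := Finset.prod_ne_zero_iff.mpr hfac
  have hmkX : mk X = θ := AdjoinRoot.mk_X
  have hmkH : mk Hpoly = Hv := by
    rw [hH, map_prod]
    simp [map_sub, map_pow, hmkX, hHv]
  have hmkG : mk Gpoly = Hv := by
    rw [hG, map_prod]
    refine Finset.prod_congr rfl fun j hj => ?_
    simp [map_sub, map_pow, hmkX, hred]
  -- step A
  have hdvd1 : qIntP p ∣ Gpoly - X ^ m * Hpoly := by
    rw [← AdjoinRoot.mk_eq_zero]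
    rw [map_sub, map_mul, map_pow, hmkX]
    rw [hmkG, hmkH, hθm, one_mul, sub_self]
  -- step B
  have hdvd2 : qIntP p ∣ derivative (Gpoly - X ^ m * Hpoly) := by
    rcases Nat.lt_or_ge a 2 with ha1 | ha2
    · -- a = 1
      have ha' : a = 1 := by omega
      have hGH : Gpoly = Hpoly := by
        rw [hG, hH]
        refine Finset.prod_congr rfl fun j _ => by rw [ha']; norm_num
      have hm0 : m = 0 := by rw [hm, ha']; simp
      rw [hGH, hm0, pow_zero, one_mul, sub_self]
      simp
    · -- a ≥ 2
      have hm1 : 1 ≤ m := by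
        rw [hm, hchoose]
        have h1 : 1 ≤ a - 1 := by omega
        have h2 : 1 ≤ p * t := Nat.mul_pos (by omega) (by omega)
        exact Nat.mul_pos h1 h2
      have hS := pair_sum p hp3 θ hθp hord
      have h2m : 2 * m = (a - 1) * (p * (p - 1)) := by
        rw [hm, hchoose, show p - 1 = 2 * t by omega]; ring
      have hmkC : ∀ n : ℕ, mk (C ((n : ℚ))) = (n : K) := by
        intro n
        rw [hmk, AdjoinRoot.mk_C]
        simp
      have hdX : ∀ n : ℕ, mk (derivative ((1 : ℚ[X]) - X ^ n)) = -((n : K) * θ ^ (n - 1)) := by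
        intro n
        rw [derivative_sub, derivative_one, derivative_X_pow, zero_sub, map_neg, map_mul,
          map_pow, hmkX, hmkC]
      have hkey : ∀ j ∈ range (p - 1),
          (∏ j' ∈ (range (p - 1)).erase j, ((1 : K) - θ ^ ((a - 1) * p + (j' + 1)))) =
            Hv * (1 - θ ^ (j + 1))⁻¹ := by
        intro j hj
        have h1 := Finset.mul_prod_erase (range (p - 1))
          (fun j' => (1 : K) - θ ^ ((a - 1) * p + (j' + 1))) hj
        have h2 : (∏ j' ∈ range (p - 1), ((1 : K) - θ ^ ((a - 1) * p + (j' + 1)))) = Hv := by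
          rw [hHv]
          exact Finset.prod_congr rfl fun j' _ => by rw [hred]
        rw [h2, hred] at h1
        rw [← h1, mul_comm ((1:K) - θ ^ (j + 1)), mul_assoc,
          mul_inv_cancel₀ (hfac j hj), mul_one]
      have hkey' : ∀ j ∈ range (p - 1),
          (∏ j' ∈ (range (p - 1)).erase j, ((1 : K) - θ ^ (j' + 1))) =
            Hv * (1 - θ ^ (j + 1))⁻¹ := by
        intro j hj
        have h1 := Finset.mul_prod_erase (range (p - 1))
          (fun j' => (1 : K) - θ ^ (j' + 1)) hj
        rw [← hHv] at h1
        rw [← h1, mul_comm ((1:K) - θ ^ (j + 1)), mul_assoc,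
          mul_inv_cancel₀ (hfac j hj), mul_one]
      have hmkdG : mk (derivative Gpoly) =
          ∑ j ∈ range (p - 1), (Hv * (1 - θ ^ (j + 1))⁻¹) *
            (-((((a - 1) * p + (j + 1)) : ℕ) : K) * θ ^ j) := by
        rw [hG, deriv_prod_finset, map_sum]
        refine Finset.sum_congr rfl fun j hj => ?_
        rw [map_mul, map_prod]
        congr 1
        · rw [← hkey j hj]
          exact Finset.prod_congr rfl fun j' _ => by rw [map_sub, map_one, map_pow, hmkX]
        · rw [hdX, show ((a - 1) * p + (j + 1)) - 1 = (a - 1) * p + j by omega, hred]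
          ring
      have hmkdH : mk (derivative Hpoly) =
          ∑ j ∈ range (p - 1), (Hv * (1 - θ ^ (j + 1))⁻¹) *
            (-(((j + 1) : ℕ) : K) * θ ^ j) := by
        rw [hH, deriv_prod_finset, map_sum]
        refine Finset.sum_congr rfl fun j hj => ?_
        rw [map_mul, map_prod]
        congr 1
        · rw [← hkey' j hj]
          exact Finset.prod_congr rfl fun j' _ => by rw [map_sub, map_one, map_pow, hmkX]
        · rw [hdX, show (j + 1) - 1 = j by omega]
          ring
      have hθm1 : θ ^ (m - 1) = θ ^ (p - 1) := by
        have h1 : θ ^ (m - 1) * θ = 1 := by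
          rw [← pow_succ, show m - 1 + 1 = m by omega, hθm]
        have h2 : θ ^ (p - 1) * θ = 1 := by
          rw [← pow_succ, show p - 1 + 1 = p by omega, hθp]
        exact mul_right_cancel₀ hθ0 (h1.trans h2.symm)
      have hmderiv : mk (derivative (Gpoly - X ^ m * Hpoly)) =
          mk (derivative Gpoly) -
            ((m : K) * θ ^ (p - 1) * Hv + mk (derivative Hpoly)) := by
        rw [derivative_sub, derivative_mul, derivative_X_pow]
        simp only [map_sub, map_add, map_mul, map_pow, hmkX, hmkH, hmkC, hθm, hθm1, one_mul]
      rw [← AdjoinRoot.mk_eq_zero]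
      show mk (derivative (Gpoly - X ^ m * Hpoly)) = 0
      rw [hmderiv, hmkdG, hmkdH]
      have hθj : ∀ j, θ ^ j = θ ^ (p - 1) * θ ^ (j + 1) := by
        intro j
        rw [← pow_add, show p - 1 + (j + 1) = p + j by omega, pow_add, hθp, one_mul]
      have hsplit : ∀ j ∈ range (p - 1),
          (Hv * (1 - θ ^ (j + 1))⁻¹) * (-((((a - 1) * p + (j + 1)) : ℕ) : K) * θ ^ j) -
            (Hv * (1 - θ ^ (j + 1))⁻¹) * (-(((j + 1) : ℕ) : K) * θ ^ j) =
          (-((((a - 1) * p) : ℕ) : K)) *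
            (θ ^ (p - 1) * (Hv * (θ ^ (j + 1) * (1 - θ ^ (j + 1))⁻¹))) := by
        intro j hj
        have hc : ((((a - 1) * p + (j + 1)) : ℕ) : K) =
            ((((a - 1) * p) : ℕ) : K) + (((j + 1) : ℕ) : K) := by push_cast; ring
        rw [hc, hθj j]
        ring
      have hsum2 : (∑ j ∈ range (p - 1), (Hv * (1 - θ ^ (j + 1))⁻¹) *
            (-((((a - 1) * p + (j + 1)) : ℕ) : K) * θ ^ j)) -
          (∑ j ∈ range (p - 1), (Hv * (1 - θ ^ (j + 1))⁻¹) *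
            (-(((j + 1) : ℕ) : K) * θ ^ j)) =
          (-((((a - 1) * p) : ℕ) : K)) * (θ ^ (p - 1) *
            (Hv * ∑ j ∈ range (p - 1), θ ^ (j + 1) * (1 - θ ^ (j + 1))⁻¹)) := by
        rw [← Finset.sum_sub_distrib, Finset.mul_sum, Finset.mul_sum, Finset.mul_sum]
        exact Finset.sum_congr rfl hsplit
      rw [sub_add_eq_sub_sub_swap, hsum2]
      have h2mK : (2 : K) * (m : K) =
          (((a - 1) : ℕ) : K) * ((p : K) * (((p - 1) : ℕ) : K)) := by
        have e2 : (((2 * m : ℕ)) : K) = ((2 : ℕ) : K) * (m : K) := Nat.cast_mul _ _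
        have e3 : ((((a - 1) * (p * (p - 1)) : ℕ)) : K) =
            (((a - 1) : ℕ) : K) * ((p : K) * (((p - 1) : ℕ) : K)) :=
          (Nat.cast_mul _ _).trans (congrArg _ (Nat.cast_mul _ _))
        have e4 : ((2 : ℕ) : K) = 2 := Nat.cast_ofNat
        have h := congrArg (Nat.cast : ℕ → K) h2m
        rw [e2, e3, e4] at h
        exact h
      have e1 : ((((a - 1) * p) : ℕ) : K) = (((a - 1) : ℕ) : K) * (p : K) := Nat.cast_mul _ _
      rw [e1]
      linear_combination (-((((a - 1) : ℕ) : K) * (p : K)) * θ ^ (p - 1) * Hv / 2) * hS -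
        (θ ^ (p - 1) * Hv / 2) * h2mK
  constructor
  · exact sq_dvd_aux (hirr.separable) hdvd1 hdvd2
  · intro hdvdH
    have h0 : mk Hpoly = 0 := AdjoinRoot.mk_eq_zero.mpr hdvdH
    rw [hmkH] at h0
    exact hHvne h0


/-- For an odd prime `p` and a positive integer `a`:
`binom_q(ap−1, p−1) ≡ q^{(a−1)C(p,2)} (mod [p]_q²)`. -/
theorem qbin_ap_sub_one_p_sub_one (p a : ℕ) (hp : p.Prime) (hodd : Odd p) (ha : 0 < a) :
    qCong p 2 (qbin (a * p - 1) (p - 1))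
      ((RatFunc.X : RatFunc ℚ) ^ ((a - 1) * p.choose 2)) := by
  haveI : Fact p.Prime := ⟨hp⟩
  have hp2 := hp.two_le
  have hap : p ≤ a * p := Nat.le_mul_of_pos_left p ha
  obtain ⟨hdvd, hcop⟩ := key_dvd p a hp hodd ha
  obtain ⟨c, hc⟩ := hdvd
  set m := (a - 1) * p.choose 2 with hm
  set Gpoly : Polynomial ℚ := ∏ j ∈ range (p - 1), (1 - X ^ ((a - 1) * p + (j + 1))) with hG
  set Hpoly : Polynomial ℚ := ∏ j ∈ range (p - 1), (1 - X ^ (j + 1)) with hH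
  have hne : ∀ n : ℕ, (∏ j ∈ range n, (1 - (X : Polynomial ℚ) ^ (j + 1))) ≠ 0 := by
    intro n
    refine Finset.prod_ne_zero_iff.mpr fun j _ => ?_
    intro h
    have h2 := congrArg (Polynomial.eval 0) h
    simp at h2
  have hHne : Hpoly ≠ 0 := hne _
  have hq : qbin (a * p - 1) (p - 1) =
      algebraMap (Polynomial ℚ) (RatFunc ℚ) Gpoly /
        algebraMap (Polynomial ℚ) (RatFunc ℚ) Hpoly := by
    rw [qbin, if_pos (by omega : p - 1 ≤ a * p - 1)]
    rw [show a * p - 1 - (p - 1) = a * p - p by omega]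
    unfold qqPoch
    have hsplit : (∏ j ∈ range (a * p - 1), (1 - (X : Polynomial ℚ) ^ (j + 1))) =
        (∏ j ∈ range (a * p - p), (1 - X ^ (j + 1))) * Gpoly := by
      rw [show a * p - 1 = (a * p - p) + (p - 1) by omega, Finset.prod_range_add]
      congr 1
      rw [hG]
      refine Finset.prod_congr rfl fun j _ => ?_
      rw [show a * p - p + j + 1 = (a - 1) * p + (j + 1) by rw [Nat.sub_one_mul]; omega]
    rw [hsplit, map_mul, ← hH]
    rw [mul_comm (algebraMap (Polynomial ℚ) (RatFunc ℚ)
        (∏ j ∈ range (a * p - p), (1 - X ^ (j + 1))))]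
    rw [mul_div_mul_right _ _ (RatFunc.algebraMap_ne_zero (hne (a * p - p)))]
  refine ⟨c, Hpoly, ?_, ?_⟩
  · have hcyc : qIntP p = cyclotomic p ℚ := by rw [cyclotomic_prime]; rfl
    have hirr : Irreducible (qIntP p) := hcyc ▸ cyclotomic.irreducible_rat hp.pos
    rw [isCoprime_comm, hirr.coprime_iff_not_dvd]
    exact hcop
  · rw [hq, ← RatFunc.algebraMap_X, ← map_pow, sub_mul,
      div_mul_cancel₀ _ (RatFunc.algebraMap_ne_zero hHne), ← map_mul, ← map_sub, hc]
end
end
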